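/- Off-by-ℓ Zames–Falb ρ-hard IQC, odd case. Let n ∈ ℕ and let g : ℝⁿ → ℝ be an admissible potential with gradient ∇g, and assume additionally that g is even, i.e. g(−x) = g(x) for all x (so that ∇g is odd). Let ρ ∈ (0,1], γ ∈ (0,1], and ℓ ≥ 1 a natural number. Let y : ℕ → ℝⁿ be any sequence and set u_k = ∇g(y_k), adopting the convention y_j = 0 for j < 0. Then for every T ∈ ℕ: ∑_{k=0}^{T} ρ^{−2k} ⟨u_k, y_k + γ·ρ^{2ℓ}·y_{k−ℓ}⟩ ≥ 0. -/

import Mathlib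

open scoped RealInnerProductSpace

lemma zf_grad_ineq {n : ℕ} (g : EuclideanSpace ℝ (Fin n) → ℝ)
    (hconv : ConvexOn ℝ Set.univ g) (hdiff : Differentiable ℝ g)
    (x z : EuclideanSpace ℝ (Fin n)) :
    g x + ⟪gradient g x, z - x⟫ ≤ g z := by
  set h : ℝ → ℝ := fun t => g (x + t • (z - x)) with hh
  have hline : ∀ t : ℝ, HasDerivAt (fun s : ℝ => x + s • (z - x)) (z - x) t := by
    intro t
    simpa using ((hasDerivAt_id t).smul_const (z - x)).const_add x
  have hgr : HasFDerivAt g (InnerProductSpace.toDual ℝ _ (gradient g x)) x := by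
    have := (hdiff x).hasGradientAt
    rwa [hasGradientAt_iff_hasFDerivAt] at this
  have hx0 : x + (0 : ℝ) • (z - x) = x := by simp
  have hder : HasDerivAt h ⟪gradient g x, z - x⟫ 0 := by
    have := (hx0 ▸ hgr).comp_hasDerivAt 0 (hline 0)
    simp [h, Function.comp, InnerProductSpace.toDual_apply_apply] at this ⊢
    exact this
  have hconvh : ConvexOn ℝ Set.univ h := by
    have := hconv.comp_affineMap (AffineMap.lineMap x z : ℝ →ᵃ[ℝ] EuclideanSpace ℝ (Fin n))
    simp only [Set.preimage_univ] at this
    suffices e : h = g ∘ (AffineMap.lineMap x z : ℝ →ᵃ[ℝ] EuclideanSpace ℝ (Fin n)) by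
      rw [e]; exact this
    funext t
    simp [h, AffineMap.lineMap_apply]
    congr 1
    module
  have hslope := hconvh.le_slope_of_hasDerivAt (Set.mem_univ (0:ℝ)) (Set.mem_univ (1:ℝ))
    one_pos hder
  have h0 : h 0 = g x := by simp [h]
  have h1 : h 1 = g z := by simp [h]
  rw [slope_def_field, h0, h1] at hslope
  rw [show (1:ℝ) - 0 = 1 by norm_num, div_one] at hslope
  linarith [hslope]

/-- Off-by-ℓ Zames–Falb ρ-hard IQC, odd case (proof of Theorem 18): for an odd
monotone gradient nonlinearity `∇g` of an even admissible potential `g`. -/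
theorem stmt_8 {n : ℕ} (g : EuclideanSpace ℝ (Fin n) → ℝ)
    (hconv : ConvexOn ℝ Set.univ g) (hdiff : Differentiable ℝ g)
    (hnonneg : ∀ x, 0 ≤ g x) (hg0 : g 0 = 0)
    (heven : ∀ x, g (-x) = g x)
    (ρ : ℝ) (hρ : ρ ∈ Set.Ioc (0 : ℝ) 1) (γ : ℝ) (hγ : γ ∈ Set.Ioc (0 : ℝ) 1)
    (ℓ : ℕ) (hℓ : 1 ≤ ℓ)
    (y : ℕ → EuclideanSpace ℝ (Fin n)) (u : ℕ → EuclideanSpace ℝ (Fin n))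
    (hu : ∀ k, u k = gradient g (y k)) :
    ∀ T : ℕ, 0 ≤ ∑ k ∈ Finset.range (T + 1),
      ρ ^ (-(2 * (k : ℤ))) *
        ⟪u k, y k + (γ * ρ ^ (2 * ℓ)) • (if ℓ ≤ k then y (k - ℓ) else 0)⟫ := by
  obtain ⟨hρ0, hρ1⟩ := hρ
  obtain ⟨hγ0, hγ1⟩ := hγ
  intro T
  set c : ℝ := γ * ρ ^ (2 * ℓ) with hc
  have hρne : ρ ≠ 0 := ne_of_gt hρ0
  have hc0 : 0 < c := mul_pos hγ0 (pow_pos hρ0 _)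
  have hc1 : c ≤ 1 := by
    calc c ≤ 1 * 1 := mul_le_mul hγ1 (pow_le_one₀ hρ0.le hρ1) (pow_pos hρ0 _).le zero_le_one
    _ = 1 := one_mul 1
  -- basic inequalities
  have hA : ∀ k, g (y k) ≤ ⟪u k, y k⟫ := by
    intro k
    have := zf_grad_ineq g hconv hdiff (y k) 0
    rw [hu k]
    simp only [zero_sub, inner_neg_right, hg0] at this
    linarith
  have hB : ∀ k, g (y k) - g (y (k - ℓ)) - ⟪u k, y k⟫ ≤ ⟪u k, y (k - ℓ)⟫ := by
    intro k
    have := zf_grad_ineq g hconv hdiff (y k) (-(y (k - ℓ)))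
    rw [heven] at this
    rw [hu k]
    rw [sub_eq_add_neg, inner_add_right, inner_neg_right, inner_neg_right] at this
    linarith
  -- termwise lower bound
  set F : ℕ → ℝ := fun j => ρ ^ (-(2 * (j : ℤ))) * g (y j) with hF
  have hFnonneg : ∀ j, 0 ≤ F j := fun j =>
    mul_nonneg (zpow_nonneg hρ0.le _) (hnonneg _)
  have hterm : ∀ k ∈ Finset.range (T + 1),
      F k - (if ℓ ≤ k then c * (ρ ^ (-(2 * (k : ℤ))) * g (y (k - ℓ))) else 0) ≤
      ρ ^ (-(2 * (k : ℤ))) * ⟪u k, y k + c • (if ℓ ≤ k then y (k - ℓ) else 0)⟫ := by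
    intro k _
    have hz : (0:ℝ) < ρ ^ (-(2 * (k : ℤ))) := zpow_pos hρ0 _
    by_cases hk : ℓ ≤ k
    · simp only [hk, if_true, inner_add_right, inner_smul_right]
      have h1 : g (y k) - c * g (y (k - ℓ)) ≤ ⟪u k, y k⟫ + c * ⟪u k, y (k - ℓ)⟫ := by
        have hB' := hB k
        have hA' := hA k
        have hgk : 0 ≤ g (y k) := hnonneg _
        nlinarith [mul_le_mul_of_nonneg_left hB' hc0.le]
      calc F k - c * (ρ ^ (-(2 * (k : ℤ))) * g (y (k - ℓ)))
          = ρ ^ (-(2 * (k : ℤ))) * (g (y k) - c * g (y (k - ℓ))) := by ring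
        _ ≤ ρ ^ (-(2 * (k : ℤ))) * (⟪u k, y k⟫ + c * ⟪u k, y (k - ℓ)⟫) := by
            exact mul_le_mul_of_nonneg_left h1 hz.le
    · simp only [hk, if_false, smul_zero, add_zero, sub_zero]
      exact mul_le_mul_of_nonneg_left (hA k) hz.le
  have hsum1 := Finset.sum_le_sum hterm
  -- compute the subtracted sum
  have hkey : ∑ k ∈ Finset.range (T + 1),
      (if ℓ ≤ k then c * (ρ ^ (-(2 * (k : ℤ))) * g (y (k - ℓ))) else 0)
      ≤ ∑ j ∈ Finset.range (T + 1), F j := by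
    rw [← Finset.sum_filter]
    have hfilter : (Finset.range (T + 1)).filter (fun k => ℓ ≤ k) = Finset.Ico ℓ (T + 1) := by
      ext k
      simp [Finset.mem_filter, Finset.mem_Ico, and_comm]
    rw [hfilter, Finset.sum_Ico_eq_sum_range]
    have hterm2 : ∀ j, c * (ρ ^ (-(2 * ((ℓ + j : ℕ) : ℤ))) * g (y (ℓ + j - ℓ))) =
        γ * F j := by
      intro j
      have hsimp : ℓ + j - ℓ = j := by omega
      rw [hsimp, hF]
      have : (ρ : ℝ) ^ (2 * ℓ) * ρ ^ (-(2 * ((ℓ + j : ℕ) : ℤ))) = ρ ^ (-(2 * (j : ℤ))) := by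
        rw [← zpow_natCast ρ (2 * ℓ), ← zpow_add₀ hρne]
        congr 1
        push_cast
        ring
      calc c * (ρ ^ (-(2 * ((ℓ + j : ℕ) : ℤ))) * g (y j))
          = γ * ((ρ ^ (2 * ℓ) * ρ ^ (-(2 * ((ℓ + j : ℕ) : ℤ)))) * g (y j)) := by
            rw [hc]; ring
        _ = γ * (ρ ^ (-(2 * (j : ℤ))) * g (y j)) := by rw [this]
    calc ∑ j ∈ Finset.range (T + 1 - ℓ),
          c * (ρ ^ (-(2 * ((ℓ + j : ℕ) : ℤ))) * g (y (ℓ + j - ℓ)))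
        = ∑ j ∈ Finset.range (T + 1 - ℓ), γ * F j := by
          exact Finset.sum_congr rfl fun j _ => hterm2 j
      _ ≤ ∑ j ∈ Finset.range (T + 1 - ℓ), F j := by
          refine Finset.sum_le_sum fun j _ => ?_
          nlinarith [hFnonneg j]
      _ ≤ ∑ j ∈ Finset.range (T + 1), F j := by
          refine Finset.sum_le_sum_of_subset_of_nonneg ?_ fun j _ _ => hFnonneg j
          exact Finset.range_subset_range.2 (by omega)
  rw [Finset.sum_sub_distrib] at hsum1
  linarith
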